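/- With ρ_r = |ξ|⁻¹ and ρ_t = ρ_r² κ = (η² + ν²/sin²θ)/ξ², on the component Σ₊ = Σ ∩ {ξ > 0} of the characteristic set one has ρ_r H_p ρ_r = 2(r - m)ρ_r and ρ_r H_p ρ_t = 4(r - m)ρ_t; in particular, restricted to the radial set Λ₊ = {μ = 0, κ = 0, ξ > 0} over the horizon, ρ_r H_p ρ_r = 2√(m² - a²) ρ_r. -/

import Mathlib

/-- The action of the Hamiltonian vector field of `p = μξ² + η² + ν²/sin²θ + 2aξν`
on a function `f(r, θ, φ, ξ, η, ν)`. -/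
noncomputable def HpApply (m a : ℝ) (f : ℝ → ℝ → ℝ → ℝ → ℝ → ℝ → ℝ)
    (r θ φ ξ η ν : ℝ) : ℝ :=
  2 * ((r ^ 2 - 2 * m * r + a ^ 2) * ξ + a * ν) * deriv (fun r' => f r' θ φ ξ η ν) r
    + 2 * η * deriv (fun θ' => f r θ' φ ξ η ν) θ
    + 2 * (ν / Real.sin θ ^ 2 + 2 * a * ξ) * deriv (fun φ' => f r θ φ' ξ η ν) φ
    - 2 * (r - m) * ξ ^ 2 * deriv (fun ξ' => f r θ φ ξ' η ν) ξ
    + 2 * (Real.cos θ / Real.sin θ ^ 3) * ν ^ 2 * deriv (fun η' => f r θ φ ξ η' ν) η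

lemma deriv_abs_inv (ξ : ℝ) (hξ : 0 < ξ) :
    deriv (fun ξ' : ℝ => |ξ'|⁻¹) ξ = -(ξ ^ 2)⁻¹ := by
  have h : (fun ξ' : ℝ => |ξ'|⁻¹) =ᶠ[nhds ξ] fun ξ' : ℝ => ξ'⁻¹ := by
    filter_upwards [eventually_gt_nhds hξ] with x hx
    rw [abs_of_pos hx]
  rw [h.deriv_eq, deriv_inv]

lemma deriv_theta (η ν ξ θ : ℝ) (hθ : Real.sin θ ≠ 0) :
    deriv (fun θ' => (η ^ 2 + ν ^ 2 / Real.sin θ' ^ 2) / ξ ^ 2) θ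
      = ν ^ 2 * (-(2 * Real.cos θ) / Real.sin θ ^ 4) * Real.sin θ / ξ ^ 2 := by
  have h1 : HasDerivAt (fun θ' => Real.sin θ' ^ 2)
      (2 * Real.sin θ ^ 1 * Real.cos θ) θ := (Real.hasDerivAt_sin θ).pow 2
  have h2 : HasDerivAt (fun θ' => (Real.sin θ' ^ 2)⁻¹)
      (-(2 * Real.sin θ ^ 1 * Real.cos θ) / (Real.sin θ ^ 2) ^ 2) θ :=
    h1.inv (pow_ne_zero 2 hθ)
  have h3 : HasDerivAt (fun θ' => (η ^ 2 + ν ^ 2 / Real.sin θ' ^ 2) / ξ ^ 2)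
      ((0 + ν ^ 2 * (-(2 * Real.sin θ ^ 1 * Real.cos θ) / (Real.sin θ ^ 2) ^ 2)) / ξ ^ 2) θ := by
    have := ((hasDerivAt_const θ (η ^ 2)).add (h2.const_mul (ν ^ 2))).div_const (ξ ^ 2)
    simpa [div_eq_mul_inv] using this
  rw [h3.deriv]
  field_simp
  ring

lemma deriv_xi (c ξ : ℝ) (hξ : ξ ≠ 0) :
    deriv (fun ξ' => c / ξ' ^ 2) ξ = -(2 * c) / ξ ^ 3 := by
  have h1 : HasDerivAt (fun ξ' : ℝ => ξ' ^ 2) (2 * ξ ^ 1) ξ := hasDerivAt_pow 2 ξ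
  have h2 : HasDerivAt (fun ξ' : ℝ => c / ξ' ^ 2) (-(2 * ξ ^ 1) / (ξ ^ 2) ^ 2 * c) ξ := by
    simpa [div_eq_mul_inv, mul_comm] using (h1.inv (pow_ne_zero 2 hξ)).const_mul c
  rw [h2.deriv]
  field_simp

lemma deriv_eta (c ξ η : ℝ) :
    deriv (fun η' => (η' ^ 2 + c) / ξ ^ 2) η = 2 * η / ξ ^ 2 := by
  have h := (((hasDerivAt_pow 2 η).add_const c).div_const (ξ ^ 2)).deriv
  rw [h]; norm_num

/-- With `ρ_r = |ξ|⁻¹` and `ρ_t = ρ_r²κ = (η² + ν²/sin²θ)/ξ²`, on `Σ₊ = Σ ∩ {ξ > 0}`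
one has `ρ_r H_p ρ_r = 2(r - m)ρ_r` and `ρ_r H_p ρ_t = 4(r - m)ρ_t`; restricted to the
radial set `Λ₊ = {μ = 0, κ = 0, ξ > 0}` over the horizon, `ρ_r H_p ρ_r = 2√(m² - a²)ρ_r`. -/
theorem kerr_radial_set_source (m a : ℝ) (hm : 0 < m) (ha : -m < a ∧ a < m)
    (r θ φ ξ η ν : ℝ) (hθ : Real.sin θ ≠ 0) (hξ : 0 < ξ)
    (hp : (r ^ 2 - 2 * m * r + a ^ 2) * ξ ^ 2 + η ^ 2 + ν ^ 2 / Real.sin θ ^ 2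
        + 2 * a * ξ * ν = 0) :
    |ξ|⁻¹ * HpApply m a (fun _ _ _ ξ' _ _ => |ξ'|⁻¹) r θ φ ξ η ν
        = 2 * (r - m) * |ξ|⁻¹ ∧
    |ξ|⁻¹ * HpApply m a
        (fun _ θ' _ ξ' η' ν' => (η' ^ 2 + ν' ^ 2 / Real.sin θ' ^ 2) / ξ' ^ 2) r θ φ ξ η ν
        = 4 * (r - m) * ((η ^ 2 + ν ^ 2 / Real.sin θ ^ 2) / ξ ^ 2) ∧
    (r = m + Real.sqrt (m ^ 2 - a ^ 2) → η = 0 → ν = 0 →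
      |ξ|⁻¹ * HpApply m a (fun _ _ _ ξ' _ _ => |ξ'|⁻¹) r θ φ ξ η ν
        = 2 * Real.sqrt (m ^ 2 - a ^ 2) * |ξ|⁻¹) := by
  have hξ' : ξ ≠ 0 := ne_of_gt hξ
  have habs : |ξ| = ξ := abs_of_pos hξ
  have h1 : |ξ|⁻¹ * HpApply m a (fun _ _ _ ξ' _ _ => |ξ'|⁻¹) r θ φ ξ η ν
      = 2 * (r - m) * |ξ|⁻¹ := by
    unfold HpApply
    rw [deriv_abs_inv ξ hξ]
    simp only [deriv_const']
    rw [habs]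
    field_simp
    ring
  refine ⟨h1, ?_, ?_⟩
  · unfold HpApply
    rw [deriv_theta η ν ξ θ hθ, deriv_xi (η ^ 2 + ν ^ 2 / Real.sin θ ^ 2) ξ hξ',
      deriv_eta (ν ^ 2 / Real.sin θ ^ 2) ξ η]
    simp only [deriv_const']
    rw [habs]
    field_simp
    ring
  · intro hr hη hν
    rw [h1, hr]
    ring
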